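/- For any real number x and any positive integer M, as N → ∞ one has (1 - x/N)^N = e^{-x}·(∑_{q=0}^{M} F_q(x)·(x/N)^q + O(N^{-M-1})), where F_0(x) = 1 and for q ≥ 1, F_q(x) = ∑_{k=1}^{q} ((-x)^k / k!) · ∑_{j_1+⋯+j_k=q, j_i≥1} ∏_{s=1}^{k} 1/(j_s+1). -/
import Mathlib


open Finset Filter Asymptotics

/-- The set of compositions of `q` into `k` positive parts, as tuples. -/
noncomputable def compositions (k q : ℕ) : Finset (Fin k → ℕ) :=
  (Finset.Nat.antidiagonalTuple k q).filter fun c => ∀ s, 1 ≤ c s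

/-- The coefficients `F_q(x)`. -/
noncomputable def Fcoef (x : ℝ) : ℕ → ℝ
  | 0 => 1
  | q + 1 =>
      ∑ k ∈ Finset.Icc 1 (q + 1),
        ((-x) ^ k / (Nat.factorial k : ℝ)) *
          ∑ c ∈ compositions k (q + 1), ∏ s, (1 : ℝ) / (c s + 1)

lemma fiberEq (M k q : ℕ) (hq : q ≤ M) :
    ∑ c ∈ (Fintype.piFinset fun _ : Fin k => Finset.range M).filter
        (fun c => (∑ s, (c s + 1)) = q), ∏ s, (1:ℝ)/((c s : ℝ)+2)
    = ∑ d ∈ compositions k q, ∏ s, (1:ℝ)/((d s : ℝ)+1) := by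
  apply Finset.sum_nbij' (fun c => fun s => c s + 1) (fun d => fun s => d s - 1)
  · intro c hc
    simp only [Finset.mem_filter, Fintype.mem_piFinset, Finset.mem_range] at hc
    simp only [compositions, Finset.mem_filter, Finset.Nat.mem_antidiagonalTuple]
    exact ⟨hc.2, fun s => Nat.le_add_left 1 _⟩
  · intro d hd
    simp only [compositions, Finset.mem_filter, Finset.Nat.mem_antidiagonalTuple] at hd
    simp only [Finset.mem_filter, Fintype.mem_piFinset, Finset.mem_range]
    constructor
    · intro s
      have h1 : d s ≤ ∑ i, d i := Finset.single_le_sum (fun i _ => Nat.zero_le _) (Finset.mem_univ s)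
      rw [hd.1] at h1
      have := hd.2 s
      omega
    · rw [← hd.1]
      apply Finset.sum_congr rfl
      intro s _
      have := hd.2 s
      show d s - 1 + 1 = d s
      omega
  · intro c _; funext s; show c s + 1 - 1 = c s; omega
  · intro d hd
    simp only [compositions, Finset.mem_filter] at hd
    funext s
    have := hd.2 s
    show d s - 1 + 1 = d s
    omega
  · intro c _
    apply Finset.prod_congr rfl
    intro s _
    push_cast
    ring

lemma compositions_empty (k q : ℕ) (h : q < k ∨ (k = 0 ∧ 0 < q)) :
    compositions k q = ∅ := by
  rw [Finset.eq_empty_iff_forall_notMem]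
  intro d hd
  simp only [compositions, Finset.mem_filter, Finset.Nat.mem_antidiagonalTuple] at hd
  have hk : (k : ℕ) ≤ ∑ s, d s := by
    calc (k:ℕ) = ∑ _s : Fin k, 1 := by simp
    _ ≤ ∑ s, d s := Finset.sum_le_sum fun s _ => hd.2 s
  rcases h with h | ⟨h1, h2⟩
  · omega
  · subst h1
    obtain ⟨h3, -⟩ := hd
    rw [Finset.univ_eq_empty, Finset.sum_empty] at h3
    omega

lemma coefEq (x : ℝ) (M q : ℕ) (hq : q ≤ M) :
    ∑ k ∈ Finset.range (M+1), ((-x)^k / (Nat.factorial k : ℝ)) *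
      ∑ d ∈ compositions k q, ∏ s, (1:ℝ)/((d s : ℝ)+1) = Fcoef x q := by
  match q with
  | 0 =>
    rw [Finset.sum_eq_single 0]
    · simp [compositions, Finset.Nat.antidiagonalTuple, Fcoef]
    · intro k _ hk
      rw [compositions_empty k 0 (Or.inl (Nat.pos_of_ne_zero hk))]
      simp
    · intro h
      exact absurd (Finset.mem_range.mpr (Nat.succ_pos M)) h
  | q + 1 =>
    show _ = ∑ k ∈ Finset.Icc 1 (q + 1), _
    symm
    apply Finset.sum_subset
    · intro k hk
      simp only [Finset.mem_Icc] at hk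
      simp only [Finset.mem_range]
      omega
    · intro k _ hk
      simp only [Finset.mem_Icc] at hk
      rw [compositions_empty k (q+1) (by omega)]
      simp

lemma claimA (x u : ℝ) (M : ℕ) :
    ∑ k ∈ Finset.range (M+1), ((-x)^k / (Nat.factorial k : ℝ)) *
      ∑ c ∈ (Fintype.piFinset fun _ : Fin k => Finset.range M).filter
          (fun c => (∑ s, (c s + 1)) ≤ M),
        ∏ s, u ^ (c s + 1) / ((c s : ℝ) + 2)
    = ∑ q ∈ Finset.range (M+1), Fcoef x q * u ^ q := by
  have step1 : ∀ k : ℕ,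
      ∑ c ∈ (Fintype.piFinset fun _ : Fin k => Finset.range M).filter
          (fun c => (∑ s, (c s + 1)) ≤ M),
        ∏ s, u ^ (c s + 1) / ((c s : ℝ) + 2)
      = ∑ q ∈ Finset.range (M+1), u^q * ∑ d ∈ compositions k q, ∏ s, (1:ℝ)/((d s : ℝ)+1) := by
    intro k
    have key := Finset.sum_fiberwise_of_maps_to
      (s := (Fintype.piFinset fun _ : Fin k => Finset.range M).filter
          (fun c => (∑ s, (c s + 1)) ≤ M))
      (t := Finset.range (M+1)) (g := fun c => ∑ s, (c s + 1))
      (fun c hc => Finset.mem_range.mpr (Nat.lt_succ_of_le (Finset.mem_filter.mp hc).2))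
      (fun c => ∏ s, u ^ (c s + 1) / ((c s : ℝ) + 2))
    rw [← key]
    apply Finset.sum_congr rfl
    intro q hq
    have hq' : q ≤ M := Nat.lt_succ_iff.mp (Finset.mem_range.mp hq)
    rw [← fiberEq M k q hq', Finset.mul_sum, Finset.filter_filter]
    apply Finset.sum_congr
    · apply Finset.filter_congr
      intro c _
      exact ⟨fun h => h.2, fun h => ⟨le_of_eq_of_le h hq', h⟩⟩
    · intro c hc
      have hc' : (∑ s, (c s + 1)) = q := (Finset.mem_filter.mp hc).2
      calc ∏ s, u ^ (c s + 1) / ((c s : ℝ) + 2)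
          = ∏ s, u ^ (c s + 1) * ((1:ℝ) / ((c s : ℝ) + 2)) := by
            apply Finset.prod_congr rfl
            intro s _
            rw [div_eq_mul_one_div]
        _ = (∏ s, u ^ (c s + 1)) * ∏ s, (1:ℝ) / ((c s : ℝ) + 2) := Finset.prod_mul_distrib
        _ = u ^ q * ∏ s, (1:ℝ) / ((c s : ℝ) + 2) := by
            rw [Finset.prod_pow_eq_pow_sum, hc']
  calc ∑ k ∈ Finset.range (M+1), ((-x)^k / (Nat.factorial k : ℝ)) *
      ∑ c ∈ (Fintype.piFinset fun _ : Fin k => Finset.range M).filter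
          (fun c => (∑ s, (c s + 1)) ≤ M),
        ∏ s, u ^ (c s + 1) / ((c s : ℝ) + 2)
      = ∑ k ∈ Finset.range (M+1), ∑ q ∈ Finset.range (M+1),
          ((-x)^k / (Nat.factorial k : ℝ)) *
            (u^q * ∑ d ∈ compositions k q, ∏ s, (1:ℝ)/((d s : ℝ)+1)) := by
        apply Finset.sum_congr rfl
        intro k _
        rw [step1 k, Finset.mul_sum]
    _ = ∑ q ∈ Finset.range (M+1), ∑ k ∈ Finset.range (M+1),
          ((-x)^k / (Nat.factorial k : ℝ)) *
            (u^q * ∑ d ∈ compositions k q, ∏ s, (1:ℝ)/((d s : ℝ)+1)) := Finset.sum_comm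
    _ = ∑ q ∈ Finset.range (M+1), Fcoef x q * u ^ q := by
        apply Finset.sum_congr rfl
        intro q hq
        have hq' : q ≤ M := Nat.lt_succ_iff.mp (Finset.mem_range.mp hq)
        rw [← coefEq x M q hq', Finset.sum_mul]
        apply Finset.sum_congr rfl
        intro k _
        ring

lemma expandT (u x : ℝ) (M k : ℕ) :
    (-x * ∑ i ∈ Finset.range M, u^(i+1)/((i:ℝ)+2))^k
    = (-x)^k * ∑ c ∈ Fintype.piFinset (fun _ : Fin k => Finset.range M),
        ∏ s, u ^ (c s + 1) / ((c s : ℝ) + 2) := by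
  rw [mul_pow]
  congr 1
  rw [← Finset.prod_univ_sum (fun _ : Fin k => Finset.range M)
      (fun _ i => u^(i+1)/((i:ℝ)+2))]
  rw [Finset.prod_const, Finset.card_univ, Fintype.card_fin]

lemma tail_bound (x u : ℝ) (M : ℕ) (hu : |u| ≤ 1) :
    |∑ k ∈ Finset.range (M+1), ((-x)^k / (Nat.factorial k : ℝ)) *
      ∑ c ∈ (Fintype.piFinset fun _ : Fin k => Finset.range M).filter
          (fun c => ¬ ((∑ s, (c s + 1)) ≤ M)),
        ∏ s, u ^ (c s + 1) / ((c s : ℝ) + 2)|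
    ≤ (∑ k ∈ Finset.range (M+1), |x|^k / (Nat.factorial k : ℝ) * M^k) * |u|^(M+1) := by
  rw [Finset.sum_mul]
  refine (Finset.abs_sum_le_sum_abs _ _).trans (Finset.sum_le_sum fun k _ => ?_)
  rw [abs_mul, abs_div, abs_pow, abs_neg, Nat.abs_cast]
  rw [mul_assoc]
  apply mul_le_mul_of_nonneg_left _ (by positivity)
  refine (Finset.abs_sum_le_sum_abs _ _).trans ?_
  have hterm : ∀ c ∈ (Fintype.piFinset fun _ : Fin k => Finset.range M).filter
      (fun c => ¬ ((∑ s, (c s + 1)) ≤ M)),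
      |∏ s, u ^ (c s + 1) / ((c s : ℝ) + 2)| ≤ |u|^(M+1) := by
    intro c hc
    have hc' : ¬ ((∑ s, (c s + 1)) ≤ M) := (Finset.mem_filter.mp hc).2
    rw [Finset.abs_prod]
    calc ∏ s, |u ^ (c s + 1) / ((c s : ℝ) + 2)|
        ≤ ∏ s, |u|^(c s + 1) := by
          apply Finset.prod_le_prod (fun s _ => abs_nonneg _)
          intro s _
          rw [abs_div, abs_pow]
          have h2 : (1:ℝ) ≤ |((c s : ℝ) + 2)| := by
            rw [abs_of_nonneg (by positivity)]
            have : (0:ℝ) ≤ (c s : ℝ) := Nat.cast_nonneg _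
            linarith
          exact div_le_self (by positivity) h2
      _ = |u| ^ (∑ s, (c s + 1)) := Finset.prod_pow_eq_pow_sum _ _ _
      _ ≤ |u|^(M+1) := pow_le_pow_of_le_one (abs_nonneg _) hu (by omega)
  calc ∑ c ∈ (Fintype.piFinset fun _ : Fin k => Finset.range M).filter
          (fun c => ¬ ((∑ s, (c s + 1)) ≤ M)),
        |∏ s, u ^ (c s + 1) / ((c s : ℝ) + 2)|
      ≤ ∑ _c ∈ (Fintype.piFinset fun _ : Fin k => Finset.range M).filter
          (fun c => ¬ ((∑ s, (c s + 1)) ≤ M)), |u|^(M+1) := Finset.sum_le_sum hterm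
    _ = ((Fintype.piFinset fun _ : Fin k => Finset.range M).filter
          (fun c => ¬ ((∑ s, (c s + 1)) ≤ M))).card * |u|^(M+1) := by
        rw [Finset.sum_const, nsmul_eq_mul]
    _ ≤ (M:ℝ)^k * |u|^(M+1) := by
        apply mul_le_mul_of_nonneg_right _ (by positivity)
        have h1 : ((Fintype.piFinset fun _ : Fin k => Finset.range M).filter
            (fun c => ¬ ((∑ s, (c s + 1)) ≤ M))).card
            ≤ (Fintype.piFinset fun _ : Fin k => Finset.range M).card :=
          Finset.card_filter_le _ _
        have h2 : (Fintype.piFinset fun _ : Fin k => Finset.range M).card = M^k := by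
          rw [Fintype.card_piFinset]
          simp
        rw [h2] at h1
        calc (((Fintype.piFinset fun _ : Fin k => Finset.range M).filter
            (fun c => ¬ ((∑ s, (c s + 1)) ≤ M))).card : ℝ) ≤ ((M^k : ℕ) : ℝ) := by
              exact_mod_cast h1
          _ = (M:ℝ)^k := by push_cast; ring

lemma algebra_bound (x u : ℝ) (M : ℕ) (hu : |u| ≤ 1) :
    |∑ k ∈ Finset.range (M+1),
        (-x * ∑ i ∈ Finset.range M, u^(i+1)/((i:ℝ)+2))^k / (Nat.factorial k : ℝ)
      - ∑ q ∈ Finset.range (M+1), Fcoef x q * u^q|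
    ≤ (∑ k ∈ Finset.range (M+1), |x|^k / (Nat.factorial k : ℝ) * M^k) * |u|^(M+1) := by
  have hW : ∀ k ∈ Finset.range (M+1),
      (-x * ∑ i ∈ Finset.range M, u^(i+1)/((i:ℝ)+2))^k / (Nat.factorial k : ℝ)
      = ((-x)^k / (Nat.factorial k : ℝ)) *
          (∑ c ∈ (Fintype.piFinset fun _ : Fin k => Finset.range M).filter
              (fun c => (∑ s, (c s + 1)) ≤ M),
            ∏ s, u ^ (c s + 1) / ((c s : ℝ) + 2))
        + ((-x)^k / (Nat.factorial k : ℝ)) *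
          (∑ c ∈ (Fintype.piFinset fun _ : Fin k => Finset.range M).filter
              (fun c => ¬ ((∑ s, (c s + 1)) ≤ M)),
            ∏ s, u ^ (c s + 1) / ((c s : ℝ) + 2)) := by
    intro k _
    rw [expandT, ← Finset.sum_filter_add_sum_filter_not
      (Fintype.piFinset fun _ : Fin k => Finset.range M)
      (fun c => (∑ s, (c s + 1)) ≤ M)]
    ring
  rw [Finset.sum_congr rfl hW, Finset.sum_add_distrib, claimA]
  rw [add_sub_cancel_left]
  exact tail_bound x u M hu

set_option maxHeartbeats 2000000 in
theorem asymp_expansion_one_sub_div_pow (x : ℝ) (M : ℕ) (hM : 1 ≤ M) :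
    (fun N : ℕ =>
        (1 - x / N) ^ N -
          Real.exp (-x) * ∑ q ∈ Finset.range (M + 1), Fcoef x q * (x / N) ^ q)
      =O[atTop] fun N : ℕ => ((N : ℝ) ^ (M + 1))⁻¹ := by
  rw [isBigO_iff]
  set C2 : ℝ := (|x| *M)^(M+1) * (((M+2 : ℕ) : ℝ) / ((Nat.factorial (M+1) : ℝ) * (M+1))) with hC2
  set C3 : ℝ := ∑ k ∈ Finset.range (M+1), |x|^k / (Nat.factorial k : ℝ) * M^k with hC3
  clear_value C2 C3
  refine ⟨Real.exp (-x) * (12* |x| + C2 + C3) * |x|^(M+1), ?_⟩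
  have hD : (0:ℝ) < 2 * (|x|+1) * ((M:ℝ)+1) := by positivity
  have hε : (0:ℝ) < 1 / (2 * (|x|+1) * ((M:ℝ)+1)) := by positivity
  have h0 : Filter.Tendsto (fun N : ℕ => x / N) atTop (nhds 0) :=
    tendsto_const_div_atTop_nhds_zero_nat x
  have hev := (Metric.tendsto_nhds.mp h0) _ hε
  filter_upwards [hev, eventually_ge_atTop 1] with N hN hN1
  have hNR : (1:ℝ) ≤ (N:ℝ) := by exact_mod_cast hN1
  have hNpos : (0:ℝ) < N := lt_of_lt_of_le one_pos hNR
  set u := x / (N:ℝ) with hu_def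
  clear_value u
  have hdist : |u| < 1 / (2*(|x|+1)*((M:ℝ)+1)) := by
    have h := hN
    rw [Real.dist_eq, sub_zero] at h
    exact h
  have hdist' : |u| * (2*(|x|+1)*((M:ℝ)+1)) < 1 := by
    rw [lt_div_iff₀ hD] at hdist; exact hdist
  have hxM1 : (1:ℝ) ≤ (M:ℝ) := by exact_mod_cast hM
  have hu_half : |u| ≤ 1/2 := by nlinarith [abs_nonneg u, abs_nonneg x]
  have hu1 : |u| ≤ 1 := hu_half.trans (by norm_num)
  have h1u : 0 < 1 - u := by
    have := le_abs_self u; linarith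
  set W := ∑ i ∈ Finset.range M, u^(i+1)/((i:ℝ)+2) with hW_def
  clear_value W
  set S := -x * W with hS_def
  clear_value S
  have hNu : (N:ℝ) * u = x := by
    rw [hu_def]; field_simp
  have hWb : |W| ≤ (M:ℝ) * |u| := by
    rw [hW_def]
    calc |∑ i ∈ Finset.range M, u^(i+1)/((i:ℝ)+2)|
        ≤ ∑ i ∈ Finset.range M, |u^(i+1)/((i:ℝ)+2)| := Finset.abs_sum_le_sum_abs _ _
      _ ≤ ∑ _i ∈ Finset.range M, |u| := by
          apply Finset.sum_le_sum
          intro i _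
          rw [abs_div, abs_pow]
          have h2 : (1:ℝ) ≤ |((i : ℝ) + 2)| := by
            rw [abs_of_nonneg (by positivity)]
            have : (0:ℝ) ≤ (i:ℝ) := Nat.cast_nonneg _
            linarith
          calc |u|^(i+1) / |((i:ℝ)+2)| ≤ |u|^(i+1) := div_le_self (by positivity) h2
            _ ≤ |u|^1 := pow_le_pow_of_le_one (abs_nonneg u) hu1 (by omega)
            _ = |u| := pow_one _
      _ = (M:ℝ) * |u| := by rw [Finset.sum_const, Finset.card_range, nsmul_eq_mul]
  have hSb : |S| ≤ |x| * ((M:ℝ) * |u|) := by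
    rw [hS_def, abs_mul, abs_neg]
    exact mul_le_mul_of_nonneg_left hWb (abs_nonneg x)
  have hS1 : |S| ≤ 1 := by
    refine hSb.trans ?_
    nlinarith [abs_nonneg u, abs_nonneg x]
  have hE2xu : 2* |x| * |u| ≤ 1 := by nlinarith [abs_nonneg u, abs_nonneg x]
  -- log expansion
  have hlog := Real.abs_log_sub_add_sum_range_le (show |u| < 1 by linarith) (M+1)
  have hsum_id : (N:ℝ) * ∑ i ∈ Finset.range (M+1), u^(i+1)/((i:ℝ)+1) = x + x * W := by
    rw [Finset.mul_sum]
    rw [Finset.sum_range_succ' (fun i => (N:ℝ) * (u^(i+1)/((i:ℝ)+1))) M]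
    have hterm : ∀ i ∈ Finset.range M,
        (N:ℝ) * (u^(i+1+1)/(((i+1:ℕ):ℝ)+1)) = x * (u^(i+1)/((i:ℝ)+2)) := by
      intro i _
      have hp : u^(i+1+1) = u * u^(i+1) := by ring
      rw [hp]
      push_cast
      rw [← hNu]
      ring
    rw [Finset.sum_congr rfl hterm]
    have h0t : (N:ℝ) * (u^(0+1)/(((0:ℕ):ℝ)+1)) = x := by
      simpa using hNu
    rw [h0t, hW_def, Finset.mul_sum]
    ring
  set E := (N:ℝ) * Real.log (1-u) + x + x*W with hE_def
  clear_value E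
  have hE_eq : (N:ℝ) * Real.log (1-u) = -x + S + E := by
    rw [hE_def, hS_def]; ring
  have hEb : |E| ≤ 2* |x| * |u|^(M+1) := by
    have h2 : E = (N:ℝ) * ((∑ i ∈ Finset.range (M+1), u^(i+1)/((i:ℝ)+1)) + Real.log (1-u)) := by
      rw [hE_def, mul_add, hsum_id]; ring
    rw [h2, abs_mul, Nat.abs_cast]
    calc (N:ℝ) * |(∑ i ∈ Finset.range (M+1), u^(i+1)/((i:ℝ)+1)) + Real.log (1-u)|
        ≤ (N:ℝ) * (|u|^(M+1+1)/(1-|u|)) :=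
          mul_le_mul_of_nonneg_left hlog (Nat.cast_nonneg N)
      _ ≤ (N:ℝ) * (2* |u|^(M+1+1)) := by
          apply mul_le_mul_of_nonneg_left _ (Nat.cast_nonneg N)
          rw [div_le_iff₀ (by linarith)]
          nlinarith [pow_nonneg (abs_nonneg u) (M+2)]
      _ = 2 * ((N:ℝ)* |u|) * |u|^(M+1) := by rw [pow_succ]; ring
      _ = 2* |x| * |u|^(M+1) := by
          have h3 : (N:ℝ)* |u| = |x| := by
            rw [← abs_of_nonneg (le_of_lt hNpos), ← abs_mul, hNu]
          rw [h3]
  have hE1 : |E| ≤ 1 := by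
    have h4 : |u|^(M+1) ≤ |u| := by
      calc |u|^(M+1) ≤ |u|^1 := pow_le_pow_of_le_one (abs_nonneg u) hu1 (by omega)
        _ = |u| := pow_one _
    have h5 : 2 * |x| * |u|^(M+1) ≤ 2 * |x| * |u| :=
      mul_le_mul_of_nonneg_left h4 (by positivity)
    linarith
  -- pow to exp
  have hpow : (1 - u)^N = Real.exp (-x) * Real.exp S * Real.exp E := by
    rw [← Real.exp_log h1u, ← Real.exp_nat_mul, hE_eq, Real.exp_add, Real.exp_add]
  have hexpS : Real.exp S ≤ 3 := by
    have : S ≤ 1 := (le_abs_self S).trans hS1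
    calc Real.exp S ≤ Real.exp 1 := Real.exp_le_exp.mpr this
      _ ≤ 3 := by linarith [Real.exp_one_lt_d9]
  have hexpb := Real.exp_bound hS1 (Nat.succ_pos M)
  have hb3 := algebra_bound x u M hu1
  -- assembly
  set T := ∑ k ∈ Finset.range (M+1), S^k / (Nat.factorial k : ℝ) with hT_def
  clear_value T
  set P := ∑ q ∈ Finset.range (M+1), Fcoef x q * u^q with hP_def
  clear_value P
  have key : |Real.exp (-x) * Real.exp S * Real.exp E - Real.exp (-x) * P|
      ≤ Real.exp (-x) * ((12* |x| + C2 + C3) * |u|^(M+1)) := by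
    have hfac : Real.exp (-x) * Real.exp S * Real.exp E - Real.exp (-x) * P
        = Real.exp (-x) * (Real.exp S * Real.exp E - P) := by ring
    rw [hfac, abs_mul, abs_of_nonneg (Real.exp_nonneg _)]
    apply mul_le_mul_of_nonneg_left _ (Real.exp_nonneg _)
    have tri : |Real.exp S * Real.exp E - P|
        ≤ |Real.exp S * Real.exp E - Real.exp S| + |Real.exp S - T| + |T - P| := by
      have := abs_sub_le (Real.exp S * Real.exp E) (Real.exp S) P
      have := abs_sub_le (Real.exp S) T P
      linarith [abs_sub_le (Real.exp S * Real.exp E) T P,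
        abs_sub_le (Real.exp S * Real.exp E) (Real.exp S) T]
    refine tri.trans ?_
    have b1 : |Real.exp S * Real.exp E - Real.exp S| ≤ 12* |x| * |u|^(M+1) := by
      have h5 : Real.exp S * Real.exp E - Real.exp S = Real.exp S * (Real.exp E - 1) := by ring
      rw [h5, abs_mul, abs_of_nonneg (Real.exp_nonneg _)]
      calc Real.exp S * |Real.exp E - 1| ≤ 3 * (2 * |E|) := by
            apply mul_le_mul hexpS (Real.abs_exp_sub_one_le hE1) (abs_nonneg _) (by norm_num)
        _ ≤ 3 * (2 * (2* |x| * |u|^(M+1))) := by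
            linarith [hEb]
        _ = 12* |x| * |u|^(M+1) := by ring
    have b2 : |Real.exp S - T| ≤ C2 * |u|^(M+1) := by
      have h6 : |S|^(M+1) ≤ (|x| * (M:ℝ))^(M+1) * |u|^(M+1) := by
        calc |S|^(M+1) ≤ (|x| * ((M:ℝ) * |u|))^(M+1) :=
              pow_le_pow_left₀ (abs_nonneg S) hSb (M+1)
          _ = (|x| * (M:ℝ))^(M+1) * |u|^(M+1) := by rw [← mul_pow]; ring_nf
      refine hexpb.trans ?_
      simp only [Nat.succ_eq_add_one]
      rw [hC2]
      push_cast
      exact le_trans (mul_le_mul_of_nonneg_right h6 (by positivity)) (le_of_eq (by ring))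
    have b3 : |T - P| ≤ C3 * |u|^(M+1) := by
      rw [hT_def, hS_def, hW_def, hC3]
      exact hb3
    linarith
  rw [Real.norm_eq_abs, Real.norm_eq_abs]
  calc |(1 - u)^N - Real.exp (-x) * P|
      = |Real.exp (-x) * Real.exp S * Real.exp E - Real.exp (-x) * P| := by
        rw [hpow]
    _ ≤ Real.exp (-x) * ((12 * |x| + C2 + C3) * |u|^(M+1)) := key
    _ = Real.exp (-x) * (12 * |x| + C2 + C3) * |x|^(M+1) * ((N:ℝ)^(M+1))⁻¹ := by
        have h7 : |u|^(M+1) = |x|^(M+1) * ((N:ℝ)^(M+1))⁻¹ := by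
          rw [hu_def, abs_div, div_pow, abs_of_nonneg (le_of_lt hNpos)]
          rw [div_eq_mul_inv]
        rw [h7]; ring
    _ ≤ Real.exp (-x) * (12 * |x| + C2 + C3) * |x|^(M+1) * |((N:ℝ)^(M+1))⁻¹| := by
        have habs : |((N:ℝ)^(M+1))⁻¹| = ((N:ℝ)^(M+1))⁻¹ := abs_of_nonneg (by positivity)
        rw [habs]
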